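/- Suppose ϕ : I → ℝ is differentiable and satisfies ϕ·ϕ' + f₂·F·ϕ + f₃·F² = 0 on I, where F' = f₁·F, G' = f₂·F, and the constant k equals f₂(x)/(f₃(x)·F(x)) for all x ∈ I (with k ≠ 0). Then the potential Ψ(x) = (1 + k·ϕ(x))·exp(-(1 + k·ϕ(x)) - k·G(x)) is constant on I. -/

import Mathlib

theorem abel_potential_constant
    (I : Set ℝ) (hI : IsOpen I) (hIconn : I.OrdConnected)
    (f₁ f₂ f₃ : ℝ → ℝ)
    (hf₁ : ContinuousOn f₁ I) (hf₂ : ContinuousOn f₂ I) (hf₃ : ContinuousOn f₃ I)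
    (hf₃0 : ∀ x ∈ I, f₃ x ≠ 0)
    (F G : ℝ → ℝ) (hF0 : ∀ x ∈ I, F x ≠ 0)
    (hF : ∀ x ∈ I, HasDerivAt F (f₁ x * F x) x)
    (hG : ∀ x ∈ I, HasDerivAt G (f₂ x * F x) x)
    (k : ℝ) (hk : k ≠ 0) (hkf : ∀ x ∈ I, k * f₃ x * F x = f₂ x)
    (ϕ : ℝ → ℝ) (ϕ' : ℝ → ℝ)
    (hϕ : ∀ x ∈ I, HasDerivAt ϕ (ϕ' x) x)
    (hode : ∀ x ∈ I, ϕ x * ϕ' x + f₂ x * F x * ϕ x + f₃ x * F x ^ 2 = 0)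
    (Ψ : ℝ → ℝ)
    (hΨ : ∀ x ∈ I, Ψ x = (1 + k * ϕ x) * Real.exp (-(1 + k * ϕ x) - k * G x)) :
    ∀ x ∈ I, ∀ y ∈ I, Ψ x = Ψ y := by
  set g : ℝ → ℝ := fun x => (1 + k * ϕ x) * Real.exp (-(1 + k * ϕ x) - k * G x) with hgdef
  have key : ∀ x ∈ I, HasDerivAt g 0 x := by
    intro x hx
    have h1 : HasDerivAt (fun x => 1 + k * ϕ x) (k * ϕ' x) x :=
      ((hϕ x hx).const_mul k).const_add 1
    have h2 : HasDerivAt (fun x => -(1 + k * ϕ x) - k * G x)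
        (-(k * ϕ' x) - k * (f₂ x * F x)) x :=
      h1.neg.sub ((hG x hx).const_mul k)
    have h3 := h1.mul h2.exp
    refine h3.congr_deriv ?_
    have ho := hode x hx
    have hkx := hkf x hx
    linear_combination -(k^2 * Real.exp (-(1 + k * ϕ x) - k * G x)) * ho
      + (k * F x * Real.exp (-(1 + k * ϕ x) - k * G x)) * hkx
  have hconv : Convex ℝ I := convex_iff_ordConnected.mpr hIconn
  have hdiff : DifferentiableOn ℝ g I := fun x hx =>
    ((key x hx).differentiableAt).differentiableWithinAt
  have hfd : ∀ x ∈ I, fderivWithin ℝ g I x = 0 := by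
    intro x hx
    have := ((key x hx).hasFDerivAt.hasFDerivWithinAt).fderivWithin
      (hI.uniqueDiffOn x hx)
    rw [this]
    ext v
    simp
  intro x hx y hy
  rw [hΨ x hx, hΨ y hy]
  exact hconv.is_const_of_fderivWithin_eq_zero hdiff hfd hx hy
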